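/- For every nonnegative integer n, (1+x) * F_{n+1}(x) = x * sum over k from 0 to n of binomial(n,k) * (F_k(x) + F_{k+1}(x)), where F_n is the geometric polynomial. -/

import Mathlib

open Finset Polynomial

/-- Stirling numbers of the second kind. -/
def S : ℕ → ℕ → ℕ
  | 0, 0 => 1
  | 0, _ + 1 => 0
  | _ + 1, 0 => 0
  | n + 1, k + 1 => (k + 1) * S n (k + 1) + S n k

/-- Geometric (Fubini) polynomials. -/
noncomputable def F (n : ℕ) : Polynomial ℤ :=
  ∑ k ∈ range (n + 1), Polynomial.C ((S n k : ℤ) * (Nat.factorial k : ℤ)) * Polynomial.X ^ k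

lemma S_eq_zero : ∀ {n k : ℕ}, n < k → S n k = 0 := by
  intro n
  induction n with
  | zero => intro k h; match k, h with | k + 1, _ => rfl
  | succ n ih =>
    intro k h
    match k, h with
    | k + 1, h =>
      show (k + 1) * S n (k + 1) + S n k = 0
      rw [ih (by omega), ih (by omega)]
      simp

lemma key (n : ℕ) : ∀ k : ℕ,
    ∑ j ∈ range (n + 1), (n + 1).choose j * S j k = (k + 1) * S (n + 1) (k + 1) := by
  induction n with
  | zero => intro k; cases k <;> simp [S]
  | succ n ih =>
    intro k
    rw [Finset.sum_range_succ']
    have e1 : ∀ i ∈ range (n + 1),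
        (n + 2).choose (i + 1) * S (i + 1) k
          = (n + 1).choose i * S (i + 1) k + (n + 1).choose (i + 1) * S (i + 1) k := by
      intro i _
      rw [Nat.choose_succ_succ, Nat.add_mul]
    rw [Finset.sum_congr rfl e1, Finset.sum_add_distrib]
    have e2 : ∑ i ∈ range (n + 1), (n + 1).choose (i + 1) * S (i + 1) k + (n + 2).choose 0 * S 0 k
        = (k + 1) * S (n + 1) (k + 1) + S (n + 1) k := by
      have := Finset.sum_range_succ' (fun j => (n + 1).choose j * S j k) (n + 1)
      simp only [Nat.choose_zero_right, one_mul] at this ⊢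
      rw [← this, Finset.sum_range_succ, ih k, Nat.choose_self, one_mul]
    rw [add_assoc, e2]
    cases k with
    | zero =>
      have e3 : ∀ i ∈ range (n + 1), (n + 1).choose i * S (i + 1) 0 = 0 := by
        intro i _; rfl
      rw [Finset.sum_congr rfl e3, Finset.sum_const_zero]
      show 0 + (0 + 1) * S (n + 1) 1 + S (n + 1) 0 = (0 + 1) * ((0 + 1) * S (n + 1) 1 + S (n + 1) 0)
      ring
    | succ k =>
      have e3 : ∀ i ∈ range (n + 1), (n + 1).choose i * S (i + 1) (k + 1)
          = (k + 1) * ((n + 1).choose i * S i (k + 1)) + (n + 1).choose i * S i k := by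
        intro i _
        show (n + 1).choose i * ((k + 1) * S i (k + 1) + S i k) = _
        ring
      rw [Finset.sum_congr rfl e3, Finset.sum_add_distrib, ← Finset.mul_sum, ih (k + 1), ih k]
      show _ = (k + 1 + 1) * ((k + 1 + 1) * S (n + 1) (k + 1 + 1) + S (n + 1) (k + 1))
      ring

lemma F_succ (n : ℕ) :
    F (n + 1) = Polynomial.X * ∑ j ∈ range (n + 1), Polynomial.C (((n + 1).choose j : ℤ)) * F j := by
  have hF : ∀ j ∈ range (n + 1),
      Polynomial.C (((n + 1).choose j : ℤ)) * F j
        = ∑ k ∈ range (n + 1),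
            Polynomial.C ((((n + 1).choose j : ℕ) * S j k * Nat.factorial k : ℕ) : ℤ) * Polynomial.X ^ k := by
    intro j hj
    have hj' : j + 1 ≤ n + 1 := Finset.mem_range.mp hj
    rw [F, Finset.mul_sum]
    rw [Finset.sum_subset (Finset.range_subset_range.mpr hj')
      (fun k _ hk => by
        have : j < k := by simp at hk ⊢; omega
        rw [S_eq_zero this]; simp)]
    refine Finset.sum_congr rfl fun k _ => ?_
    rw [← mul_assoc, ← map_mul]
    congr 1
    push_cast
    ring
  rw [Finset.sum_congr rfl hF, Finset.sum_comm]
  have h2 : ∀ k ∈ range (n + 1),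
      ∑ j ∈ range (n + 1),
          Polynomial.C ((((n + 1).choose j : ℕ) * S j k * Nat.factorial k : ℕ) : ℤ) * Polynomial.X ^ k
        = Polynomial.C ((S (n + 1) (k + 1) : ℤ) * (Nat.factorial (k + 1) : ℤ)) * Polynomial.X ^ k := by
    intro k _
    rw [← Finset.sum_mul, ← map_sum]
    congr 1
    rw [← Nat.cast_sum]
    rw [show (∑ j ∈ range (n + 1), (n + 1).choose j * S j k * Nat.factorial k)
        = (∑ j ∈ range (n + 1), (n + 1).choose j * S j k) * Nat.factorial k from
      (Finset.sum_mul _ _ _).symm]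
    rw [key n k, Nat.factorial_succ]
    push_cast
    ring
  rw [Finset.sum_congr rfl h2, F, Finset.sum_range_succ', Finset.mul_sum]
  have : S (n + 1) 0 = 0 := rfl
  rw [this]
  simp only [Nat.cast_zero, zero_mul, map_zero, zero_mul, add_zero, pow_zero, mul_one]
  refine Finset.sum_congr rfl fun k _ => ?_
  ring

theorem stmt12 (n : ℕ) :
    (1 + Polynomial.X) * F (n + 1) =
      Polynomial.X * ∑ k ∈ range (n + 1), Polynomial.C (n.choose k : ℤ) * (F k + F (k + 1)) := by
  have h1 := F_succ n
  have lhs_eq : (1 + Polynomial.X) * F (n + 1)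
      = Polynomial.X * ∑ j ∈ range (n + 2), Polynomial.C (((n + 1).choose j : ℤ)) * F j := by
    rw [Finset.sum_range_succ, Nat.choose_self, Nat.cast_one, map_one, one_mul, mul_add, ← h1]
    ring
  rw [lhs_eq]
  congr 1
  -- split RHS sum
  have rhs_eq : ∑ k ∈ range (n + 1), Polynomial.C (n.choose k : ℤ) * (F k + F (k + 1))
      = (∑ k ∈ range (n + 1), Polynomial.C (n.choose k : ℤ) * F k)
        + ∑ k ∈ range (n + 1), Polynomial.C (n.choose k : ℤ) * F (k + 1) := by
    rw [← Finset.sum_add_distrib]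
    exact Finset.sum_congr rfl fun k _ => by ring
  rw [rhs_eq]
  -- extend first sum to range (n+2)
  have ext1 : ∑ k ∈ range (n + 2), Polynomial.C (n.choose k : ℤ) * F k
      = ∑ k ∈ range (n + 1), Polynomial.C (n.choose k : ℤ) * F k := by
    rw [Finset.sum_range_succ, Nat.choose_succ_self, Nat.cast_zero, map_zero, zero_mul, add_zero]
  rw [← ext1]
  -- peel j = 0 from both range (n+2) sums
  rw [Finset.sum_range_succ' (fun j => Polynomial.C (((n + 1).choose j : ℤ)) * F j),
      Finset.sum_range_succ' (fun j => Polynomial.C ((n.choose j : ℤ)) * F j)]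
  simp only [Nat.choose_zero_right, Nat.cast_one, map_one, one_mul]
  have hsum : ∑ i ∈ range (n + 1), Polynomial.C (((n + 1).choose (i + 1) : ℤ)) * F (i + 1)
      = ∑ i ∈ range (n + 1), Polynomial.C ((n.choose (i + 1) : ℤ)) * F (i + 1)
        + ∑ i ∈ range (n + 1), Polynomial.C ((n.choose i : ℤ)) * F (i + 1) := by
    rw [← Finset.sum_add_distrib]
    refine Finset.sum_congr rfl fun i _ => ?_
    rw [Nat.choose_succ_succ]
    push_cast
    rw [map_add]
    ring
  rw [hsum]
  ring
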